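/- If K has a skeleton A and x ∈ A, then x has an eventually periodic coding: there is an eventually periodic ω ∈ Σ^ℕ with π(ω) = x. -/

import Mathlib

/-- Hata graph. -/
def hataGraph {ι E : Type*} (S : ι → E → E) (A : Set E) : SimpleGraph ι where
  Adj i j := i ≠ j ∧ (S i '' A ∩ S j '' A).Nonempty
  symm := by
    refine ⟨fun i j h => ?_⟩
    exact ⟨h.1.symm, by rw [Set.inter_comm]; exact h.2⟩
  loopless := by
    refine ⟨fun i h => ?_⟩
    exact h.1 rfl

/-- `cylMap S ω m = S (ω 0) ∘ ⋯ ∘ S (ω (m-1))`. -/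
def cylMap {E : Type*} {N : ℕ} (S : Fin N → E → E) (ω : ℕ → Fin N) : ℕ → E → E
  | 0 => id
  | m + 1 => cylMap S ω m ∘ S (ω m)

/-- A sequence is eventually periodic. -/
def EvPeriodic {α : Type*} (ω : ℕ → α) : Prop :=
  ∃ p m : ℕ, 1 ≤ m ∧ ∀ k, p ≤ k → ω (k + m) = ω k

theorem skeleton_point_has_eventually_periodic_coding
    {d N : ℕ}
    (S : Fin N → EuclideanSpace ℝ (Fin d) → EuclideanSpace ℝ (Fin d))
    (r : Fin N → ℝ)
    (hr : ∀ i, 0 < r i ∧ r i < 1)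
    (hsim : ∀ i x y, dist (S i x) (S i y) = r i * dist x y)
    (K : Set (EuclideanSpace ℝ (Fin d)))
    (hKne : K.Nonempty) (hKc : IsCompact K)
    (hKinv : K = ⋃ i, S i '' K)
    (π : (ℕ → Fin N) → EuclideanSpace ℝ (Fin d))
    (hπ : ∀ ω, (⋂ m : ℕ, cylMap S ω (m + 1) '' K) = {π ω})
    (A : Set (EuclideanSpace ℝ (Fin d)))
    (hAK : A ⊆ K) (hAfin : A.Finite)
    (hstable : A ⊆ ⋃ i, S i '' A)
    (hconn : (hataGraph S A).Connected) :
    ∀ x ∈ A, ∃ ω : ℕ → Fin N, EvPeriodic ω ∧ π ω = x := by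
  classical
  intro x hx
  have hchoice : ∀ a : A, ∃ q : Fin N × A,
      S q.1 (q.2 : EuclideanSpace ℝ (Fin d)) = (a : EuclideanSpace ℝ (Fin d)) := by
    intro a
    have := hstable a.2
    simp only [Set.mem_iUnion, Set.mem_image] at this
    obtain ⟨i, b, hb, hSb⟩ := this
    exact ⟨(i, ⟨b, hb⟩), hSb⟩
  choose g hg using hchoice
  set f : A → A := fun a => (g a).2 with hf
  set seq : ℕ → A := fun k => f^[k] ⟨x, hx⟩ with hseq
  set ω : ℕ → Fin N := fun k => (g (seq k)).1 with hω
  have hseq_succ : ∀ k, seq (k + 1) = f (seq k) := by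
    intro k
    simp only [hseq]
    exact Function.iterate_succ_apply' f k _
  have key : ∀ m, cylMap S ω m ((seq m : EuclideanSpace ℝ (Fin d))) = x := by
    intro m
    induction m with
    | zero => rfl
    | succ m ih =>
      have h1 : S (ω m) ((seq (m + 1) : EuclideanSpace ℝ (Fin d)))
          = (seq m : EuclideanSpace ℝ (Fin d)) := by
        rw [hseq_succ]
        exact hg (seq m)
      show cylMap S ω m (S (ω m) ((seq (m + 1) : EuclideanSpace ℝ (Fin d)))) = x
      rw [h1]
      exact ih
  haveI : Finite A := hAfin
  have gen : ∀ p q : ℕ, p < q → seq p = seq q →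
      ∀ k, p ≤ k → seq (k + (q - p)) = seq k := by
    intro p q hpq hpqeq k hk
    have h1 : k + (q - p) = (k - p) + q := by omega
    have h2 : (k - p) + p = k := by omega
    calc seq (k + (q - p)) = f^[(k - p) + q] ⟨x, hx⟩ := by rw [h1]
      _ = f^[k - p] (seq q) := Function.iterate_add_apply f (k - p) q _
      _ = f^[k - p] (seq p) := by rw [hpqeq]
      _ = f^[(k - p) + p] ⟨x, hx⟩ := (Function.iterate_add_apply f (k - p) p _).symm
      _ = seq k := by rw [h2]
  have hper : ∃ p m, 1 ≤ m ∧ ∀ k, p ≤ k → seq (k + m) = seq k := by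
    obtain ⟨a, b, hab, heq⟩ := Finite.exists_ne_map_eq_of_infinite (fun n : ℕ => seq n)
    rcases hab.lt_or_gt with h | h
    · exact ⟨a, b - a, by omega, gen a b h heq⟩
    · exact ⟨b, a - b, by omega, gen b a h heq.symm⟩
  obtain ⟨p, m, hm1, hper⟩ := hper
  have hxmem : x ∈ ⋂ m : ℕ, cylMap S ω (m + 1) '' K := by
    refine Set.mem_iInter.2 fun m =>
      ⟨(seq (m + 1) : EuclideanSpace ℝ (Fin d)), hAK (seq (m + 1)).2, key (m + 1)⟩
  rw [hπ ω] at hxmem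
  refine ⟨ω, ⟨p, m, hm1, fun k hk => ?_⟩, hxmem.symm⟩
  simp only [hω, hper k hk]
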